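/- Given observed counts n with sufficient statistic t = An and N = Σ_i n(i) > 0, the log-likelihood p ↦ Σ_i n(i) log p(i) attains a unique maximum p* over the closure of E_A, and this extended MLE satisfies: (1) A p* = t/N, (2) supp(p*) = F_t (the smallest facial set containing supp(n)), (3) p* ∈ E_{F_t, A}. -/

import Mathlib

set_option maxHeartbeats 1000000

/-- The discrete exponential family `E_A` as a set of distributions on `I`. -/
noncomputable def expFam {I J : Type} [Fintype I] [Fintype J] (A : J → I → ℝ) :
    Set (I → ℝ) :=
  {q | ∃ θ : J → ℝ, q = fun i =>
    Real.exp (∑ j, θ j * A j i - Real.log (∑ i', Real.exp (∑ j, θ j * A j i')))}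

/-- `F` is a facial set of `P_A = conv{f_i}`: the set of maximizers of a linear
functional `g` over the columns. -/
def FacialF {I J : Type} [Fintype I] [Fintype J] (A : J → I → ℝ) (F : Finset I) : Prop :=
  ∃ g : J → ℝ, ∀ i, i ∈ F ↔ ∀ i', ∑ j, g j * A j i' ≤ ∑ j, g j * A j i

/-- The truncation `p_{F,θ}` of the family to a facial set `F`. -/
noncomputable def ptrunc {I J : Type} [Fintype I] [Fintype J] [DecidableEq I]
    (A : J → I → ℝ) (F : Finset I) (θ : J → ℝ) (i : I) : ℝ :=
  if i ∈ F then
    Real.exp (∑ j, θ j * A j i - Real.log (∑ i' ∈ F, Real.exp (∑ j, θ j * A j i')))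
  else 0

namespace ExtMLE

open Real Finset

variable {I J : Type} [Fintype I] [Fintype J] [DecidableEq I]

/-- linear functional `⟨θ, a_i⟩` -/
noncomputable def lc (A : J → I → ℝ) (θ : J → ℝ) (i : I) : ℝ := ∑ j, θ j * A j i

omit [Fintype I] [DecidableEq I] in
lemma lc_add (A : J → I → ℝ) (v v' : J → ℝ) (i : I) :
    lc A (v + v') i = lc A v i + lc A v' i := by
  simp [lc, add_mul, Finset.sum_add_distrib]

omit [Fintype I] [DecidableEq I] in
lemma lc_smul (A : J → I → ℝ) (r : ℝ) (v : J → ℝ) (i : I) :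
    lc A (r • v) i = r * lc A v i := by
  simp [lc, Finset.mul_sum, mul_assoc]

lemma zf_pos (A : J → I → ℝ) (F : Finset I) (θ : J → ℝ) (hne : F.Nonempty) :
    0 < ∑ i ∈ F, Real.exp (lc A θ i) :=
  Finset.sum_pos (fun i _ => Real.exp_pos _) hne

lemma ptrunc_mem (A : J → I → ℝ) (F : Finset I) (θ : J → ℝ) {i : I} (hi : i ∈ F)
    (hne : F.Nonempty) :
    ptrunc A F θ i = Real.exp (lc A θ i) / (∑ i' ∈ F, Real.exp (lc A θ i')) := by
  simp only [lc]
  rw [ptrunc, if_pos hi, Real.exp_sub, Real.exp_log]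
  exact Finset.sum_pos (fun _ _ => Real.exp_pos _) hne

lemma ptrunc_zero (A : J → I → ℝ) (F : Finset I) (θ : J → ℝ) {i : I} (hi : i ∉ F) :
    ptrunc A F θ i = 0 := by
  rw [ptrunc, if_neg hi]

lemma ptrunc_pos (A : J → I → ℝ) (F : Finset I) (θ : J → ℝ) {i : I} (hi : i ∈ F)
    (hne : F.Nonempty) : 0 < ptrunc A F θ i := by
  rw [ptrunc_mem A F θ hi hne]
  exact div_pos (Real.exp_pos _) (zf_pos A F θ hne)

lemma ptrunc_sum (A : J → I → ℝ) (F : Finset I) (θ : J → ℝ) (hne : F.Nonempty) :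
    ∑ i ∈ F, ptrunc A F θ i = 1 := by
  rw [Finset.sum_congr rfl (fun i hi => ptrunc_mem A F θ hi hne), ← Finset.sum_div,
    div_self (zf_pos A F θ hne).ne']

lemma log_ptrunc (A : J → I → ℝ) (F : Finset I) (θ : J → ℝ) {i : I} (hi : i ∈ F) :
    Real.log (ptrunc A F θ i)
      = lc A θ i - Real.log (∑ i' ∈ F, Real.exp (lc A θ i')) := by
  rw [ptrunc, if_pos hi, Real.log_exp]
  rfl

lemma continuous_sup' {I : Type} {s : Finset I} (hs : s.Nonempty) :
    Continuous fun x : I → ℝ => s.sup' hs x := by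
  induction hs using Finset.Nonempty.cons_induction with
  | singleton a => simpa using continuous_apply a
  | cons a s h hs ih =>
      have : (fun x : I → ℝ => (Finset.cons a s h).sup' (Finset.cons_nonempty h) x)
          = fun x : I → ℝ => max (x a) (s.sup' hs x) := by
        funext x; rw [Finset.sup'_cons hs]
      rw [this]
      exact (continuous_apply a).max ih

lemma sup'_smul {I : Type} {s : Finset I} (hs : s.Nonempty) (x : I → ℝ) {r : ℝ} (hr : 0 ≤ r) :
    s.sup' hs (fun i => r * x i) = r * s.sup' hs x := by
  apply le_antisymm
  · exact Finset.sup'_le _ _ fun i hi =>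
      mul_le_mul_of_nonneg_left (Finset.le_sup' x hi) hr
  · obtain ⟨i, hi, hEq⟩ := Finset.exists_mem_eq_sup' hs x
    rw [hEq]
    exact Finset.le_sup' (fun i => r * x i) hi

lemma exists_argmax (A : J → I → ℝ) (w : I → ℝ) (Ft : Finset I) (hne : Ft.Nonempty)
    (hw0 : ∀ i, 0 ≤ w i) (hw1 : ∑ i ∈ Ft, w i = 1)
    (i0 : I) (hi0 : i0 ∈ Ft)
    (hkey : ∀ (v : J → ℝ) (M : ℝ), (∀ i ∈ Ft, lc A v i ≤ M) →
      (∑ i ∈ Ft, w i * lc A v i = M) → ∀ i ∈ Ft, lc A v i = M) :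
    ∃ θs : J → ℝ, ∀ θ : J → ℝ,
      (∑ i ∈ Ft, w i * lc A θ i) - Real.log (∑ i ∈ Ft, Real.exp (lc A θ i)) ≤
      (∑ i ∈ Ft, w i * lc A θs i) - Real.log (∑ i ∈ Ft, Real.exp (lc A θs i)) := by
  classical
  set G : (I → ℝ) → ℝ :=
    fun x => (∑ i ∈ Ft, w i * x i) - Real.log (∑ i ∈ Ft, Real.exp (x i)) with hG
  have hZpos : ∀ x : I → ℝ, 0 < ∑ i ∈ Ft, Real.exp (x i) :=
    fun x => Finset.sum_pos (fun i _ => Real.exp_pos _) hne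
  have hGcont : Continuous G := by
    apply Continuous.sub
    · exact continuous_finset_sum _ fun i _ => continuous_const.mul (continuous_apply i)
    · exact (continuous_finset_sum _ fun i _ => Real.continuous_exp.comp (continuous_apply i)).log
        (fun x => (hZpos x).ne')
  have hGcongr : ∀ x y : I → ℝ, (∀ i ∈ Ft, x i = y i) → G x = G y := by
    intro x y h
    have h1 : (∑ i ∈ Ft, w i * x i) = ∑ i ∈ Ft, w i * y i :=
      Finset.sum_congr rfl fun i hi => by rw [h i hi]
    have h2 : (∑ i ∈ Ft, Real.exp (x i)) = ∑ i ∈ Ft, Real.exp (y i) :=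
      Finset.sum_congr rfl fun i hi => by rw [h i hi]
    simp only [hG, h1, h2]
  have hGinv : ∀ (x : I → ℝ) (c : ℝ), G (fun i => x i + c) = G x := by
    intro x c
    have h1 : (∑ i ∈ Ft, w i * (x i + c)) = (∑ i ∈ Ft, w i * x i) + c := by
      simp only [mul_add, Finset.sum_add_distrib, ← Finset.sum_mul, hw1, one_mul]
    have h2 : Real.log (∑ i ∈ Ft, Real.exp (x i + c))
        = Real.log (∑ i ∈ Ft, Real.exp (x i)) + c := by
      simp only [Real.exp_add, ← Finset.sum_mul]
      rw [Real.log_mul (hZpos x).ne' (Real.exp_pos c).ne', Real.log_exp]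
    simp only [hG, h1, h2]; ring
  -- the subspace
  have hΦadd : ∀ (p q : (J → ℝ) × ℝ),
      (fun i => if i ∈ Ft then lc A (p.1 + q.1) i + (p.2 + q.2) else 0)
      = (fun i => if i ∈ Ft then lc A p.1 i + p.2 else 0)
        + (fun i => if i ∈ Ft then lc A q.1 i + q.2 else 0) := by
    intro p q; funext i
    by_cases hi : i ∈ Ft <;> simp [hi, lc_add]; ring
  set Φ : ((J → ℝ) × ℝ) →ₗ[ℝ] (I → ℝ) :=
    { toFun := fun p => fun i => if i ∈ Ft then lc A p.1 i + p.2 else 0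
      map_add' := hΦadd
      map_smul' := by
        intro r p; funext i
        by_cases hi : i ∈ Ft <;> simp [hi, lc_smul, mul_add] } with hΦ
  set U : Submodule ℝ (I → ℝ) := LinearMap.range Φ ⊓ LinearMap.ker (LinearMap.proj i0) with hU
  have hUmem : ∀ x : I → ℝ, x ∈ U ↔ (∃ p : (J → ℝ) × ℝ, Φ p = x) ∧ x i0 = 0 := by
    intro x
    rw [hU, Submodule.mem_inf, LinearMap.mem_range, LinearMap.mem_ker]
    rfl
  set φ : (I → ℝ) → ℝ := fun x => (∑ i ∈ Ft, w i * x i) - Ft.sup' hne x with hφ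
  have hφcont : Continuous φ :=
    (continuous_finset_sum _ fun i _ => continuous_const.mul (continuous_apply i)).sub
      (continuous_sup' hne)
  have hGle : ∀ x, G x ≤ φ x := by
    intro x
    apply sub_le_sub_left
    obtain ⟨i, hi, hEq⟩ := Finset.exists_mem_eq_sup' hne x
    rw [hEq, Real.le_log_iff_exp_le (hZpos x)]
    exact Finset.single_le_sum (fun i _ => (Real.exp_pos (x i)).le) hi
  have hφnonpos : ∀ x, φ x ≤ 0 := by
    intro x
    have : (∑ i ∈ Ft, w i * x i) ≤ Ft.sup' hne x := by
      calc (∑ i ∈ Ft, w i * x i) ≤ ∑ i ∈ Ft, w i * Ft.sup' hne x :=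
            Finset.sum_le_sum fun i hi =>
              mul_le_mul_of_nonneg_left (Finset.le_sup' x hi) (hw0 i)
        _ = Ft.sup' hne x := by rw [← Finset.sum_mul, hw1, one_mul]
    simpa [hφ] using sub_nonpos.2 this
  have hφneg : ∀ x ∈ U, x ≠ 0 → φ x < 0 := by
    intro x hxU hx0
    rcases (lt_or_eq_of_le (hφnonpos x)) with h | h
    · exact h
    exfalso
    obtain ⟨⟨⟨v, c⟩, hvc⟩, hxi0⟩ := (hUmem x).1 hxU
    have hxval : ∀ i ∈ Ft, x i = lc A v i + c := by
      intro i hi; rw [← hvc]; simp [hΦ, hi]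
    set M := Ft.sup' hne x with hM
    have hsum : (∑ i ∈ Ft, w i * x i) = M := by
      have h' := h
      simp only [hφ] at h'
      linarith [h']
    have hsum' : (∑ i ∈ Ft, w i * lc A v i) = M - c := by
      have : (∑ i ∈ Ft, w i * x i) = (∑ i ∈ Ft, w i * lc A v i) + c := by
        rw [Finset.sum_congr rfl fun i hi => by rw [hxval i hi]]
        simp only [mul_add, Finset.sum_add_distrib, ← Finset.sum_mul, hw1, one_mul]
      linarith [hsum]
    have hle : ∀ i ∈ Ft, lc A v i ≤ M - c := by
      intro i hi
      have := Finset.le_sup' x hi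
      rw [hxval i hi] at this
      linarith [this]
    have hconst := hkey v (M - c) hle hsum'
    have hxconst : ∀ i ∈ Ft, x i = M := by
      intro i hi; rw [hxval i hi, hconst i hi]; ring
    have hM0 : M = 0 := by rw [← hxconst i0 hi0, hxi0]
    apply hx0
    funext i
    by_cases hi : i ∈ Ft
    · rw [hxconst i hi, hM0]; simp
    · rw [← hvc]; simp [hΦ, hi]
  -- coercivity constant
  have hφ0 : φ 0 = 0 := by
    simp [hφ, Finset.sup'_const]
  obtain ⟨c, hcpos, hcoer⟩ : ∃ c > (0:ℝ), ∀ x ∈ U, φ x ≤ -c * ‖x‖ := by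
    by_cases hS : (Metric.sphere (0 : I → ℝ) 1 ∩ (U : Set (I → ℝ))).Nonempty
    · have hScomp : IsCompact (Metric.sphere (0 : I → ℝ) 1 ∩ (U : Set (I → ℝ))) :=
        (isCompact_sphere 0 1).inter_right U.closed_of_finiteDimensional
      obtain ⟨xb, hxbS, hxbmax⟩ := hScomp.exists_isMaxOn hS hφcont.continuousOn
      have hxbU : xb ∈ U := hxbS.2
      have hxbnorm : ‖xb‖ = 1 := by
        have := hxbS.1; rwa [mem_sphere_zero_iff_norm] at this
      have hxbne : xb ≠ 0 := by
        intro h; rw [h, norm_zero] at hxbnorm; norm_num at hxbnorm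
      refine ⟨-(φ xb), by simpa using hφneg xb hxbU hxbne, ?_⟩
      intro x hxU
      by_cases hx0 : x = 0
      · simp [hx0, hφ0]
      · have hnx : (0:ℝ) < ‖x‖ := norm_pos_iff.2 hx0
        set y := ‖x‖⁻¹ • x with hy
        have hyU : y ∈ U := U.smul_mem _ hxU
        have hynorm : ‖y‖ = 1 := by
          rw [hy, norm_smul, norm_inv, norm_norm, inv_mul_cancel₀ hnx.ne']
        have hyS : y ∈ Metric.sphere (0 : I → ℝ) 1 ∩ (U : Set (I → ℝ)) :=
          ⟨by rwa [mem_sphere_zero_iff_norm], hyU⟩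
        have hφy : φ y ≤ φ xb := hxbmax hyS
        have hxy : x = ‖x‖ • y := by rw [hy, smul_smul, mul_inv_cancel₀ hnx.ne', one_smul]
        have hhomog : φ (‖x‖ • y) = ‖x‖ * φ y := by
          simp only [hφ, Pi.smul_apply, smul_eq_mul]
          rw [sup'_smul hne y hnx.le]
          rw [mul_sub]
          congr 1
          rw [Finset.mul_sum]
          exact Finset.sum_congr rfl fun i _ => by ring
        calc φ x = φ (‖x‖ • y) := by rw [← hxy]
          _ = ‖x‖ * φ y := hhomog
          _ ≤ ‖x‖ * φ xb := mul_le_mul_of_nonneg_left hφy hnx.le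
          _ = -(-(φ xb)) * ‖x‖ := by ring
    · refine ⟨1, one_pos, ?_⟩
      intro x hxU
      by_cases hx0 : x = 0
      · simp [hx0, hφ0]
      · exfalso
        apply hS
        have hnx : (0:ℝ) < ‖x‖ := norm_pos_iff.2 hx0
        refine ⟨‖x‖⁻¹ • x, ?_, U.smul_mem _ hxU⟩
        rw [mem_sphere_zero_iff_norm, norm_smul, norm_inv, norm_norm,
          inv_mul_cancel₀ hnx.ne']
  -- maximize over ball
  set R : ℝ := (|G 0| + 1) / c with hR
  have hRpos : 0 < R := div_pos (by positivity) hcpos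
  have hBcomp : IsCompact (Metric.closedBall (0 : I → ℝ) R ∩ (U : Set (I → ℝ))) :=
    (isCompact_closedBall 0 R).inter_right U.closed_of_finiteDimensional
  have hBne : (Metric.closedBall (0 : I → ℝ) R ∩ (U : Set (I → ℝ))).Nonempty :=
    ⟨0, Metric.mem_closedBall_self hRpos.le, U.zero_mem⟩
  obtain ⟨xs, hxsB, hxsmax⟩ := hBcomp.exists_isMaxOn hBne hGcont.continuousOn
  have hglobal : ∀ x ∈ U, G x ≤ G xs := by
    intro x hxU
    by_cases hx : ‖x‖ ≤ R
    · exact hxsmax ⟨Metric.mem_closedBall.2 (by simpa [dist_zero_right] using hx), hxU⟩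
    · push_neg at hx
      have h0B : G 0 ≤ G xs :=
        hxsmax ⟨Metric.mem_closedBall_self hRpos.le, U.zero_mem⟩
      have h1 : G x ≤ -c * ‖x‖ := (hGle x).trans (hcoer x hxU)
      have h2 : -c * ‖x‖ < -c * R := by
        apply mul_lt_mul_of_neg_left hx
        linarith
      have h3 : -c * R = -(|G 0| + 1) := by
        rw [hR]; field_simp
      have h4 : -(|G 0| + 1) ≤ G 0 - 1 := by
        have := abs_nonneg (G 0)
        have := neg_abs_le (G 0)
        linarith
      linarith
  obtain ⟨⟨⟨vs, cs⟩, hvc⟩, _⟩ := (hUmem xs).1 hxsB.2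
  refine ⟨vs, fun θ => ?_⟩
  have key1 : ∀ η : J → ℝ,
      (∑ i ∈ Ft, w i * lc A η i) - Real.log (∑ i ∈ Ft, Real.exp (lc A η i))
        = G (lc A η) := fun η => by rw [hG]
  rw [key1, key1]
  have hstep1 : G (lc A θ) = G (Φ (θ, -(lc A θ i0))) := by
    have := hGinv (lc A θ) (-(lc A θ i0))
    rw [← this]
    apply hGcongr
    intro i hi
    simp [hΦ, hi]
  have hmem : Φ (θ, -(lc A θ i0)) ∈ U := by
    rw [hUmem]
    exact ⟨⟨_, rfl⟩, by simp [hΦ, hi0]⟩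
  have hstep2 : G xs = G (lc A vs) := by
    rw [← hvc]
    have h1 : G (Φ (vs, cs)) = G (fun i => lc A vs i + cs) := by
      apply hGcongr; intro i hi; simp [hΦ, hi]
    rw [h1, hGinv]
  calc G (lc A θ) = G (Φ (θ, -(lc A θ i0))) := hstep1
    _ ≤ G xs := hglobal _ hmem
    _ = G (lc A vs) := hstep2

lemma face_min_const [Nonempty I] (A : J → I → ℝ) (n : I → ℕ) (Ft : Finset I)
    (g : J → ℝ) (hg : ∀ i, i ∈ Ft ↔ ∀ i', lc A g i' ≤ lc A g i)
    (hsupp : ∀ i, n i ≠ 0 → i ∈ Ft)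
    (hmin : ∀ F' : Finset I, FacialF A F' → (∀ i, n i ≠ 0 → i ∈ F') → Ft ⊆ F')
    (v : J → ℝ) (M : ℝ)
    (hle : ∀ i ∈ Ft, lc A v i ≤ M)
    (heq : ∀ i, n i ≠ 0 → lc A v i = M)
    (hnsupp : ∃ i, n i ≠ 0) :
    ∀ i ∈ Ft, lc A v i = M := by
  classical
  obtain ⟨i0, hi0n⟩ := hnsupp
  have hi0F : i0 ∈ Ft := hsupp i0 hi0n
  set Mg : ℝ := lc A g i0 with hMg
  have hgmax : ∀ i', lc A g i' ≤ Mg := (hg i0).1 hi0F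
  have hgconst : ∀ i ∈ Ft, lc A g i = Mg := fun i hi =>
    le_antisymm (hgmax i) (((hg i).1 hi) i0)
  have hglt : ∀ i, i ∉ Ft → lc A g i < Mg := by
    intro i hi
    by_contra hcon
    push_neg at hcon
    exact hi ((hg i).2 fun i' => (hgmax i').trans hcon)
  set B : ℝ := Finset.univ.sup' Finset.univ_nonempty (fun i => |lc A v i|) with hB
  have hBle : ∀ i, |lc A v i| ≤ B := fun i =>
    Finset.le_sup' (fun i => |lc A v i|) (Finset.mem_univ i)
  set R : ℝ := 1 + Finset.univ.sup' Finset.univ_nonempty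
    (fun i => if i ∈ Ft then 0 else (2*B+1)/(Mg - lc A g i)) with hRdef
  have hRbig : ∀ i, i ∉ Ft → 2*B < R * (Mg - lc A g i) := by
    intro i hi
    have hδ : 0 < Mg - lc A g i := sub_pos.2 (hglt i hi)
    have hRge : (2*B+1)/(Mg - lc A g i) < R := by
      have := Finset.le_sup' (f := fun i => if i ∈ Ft then (0:ℝ) else (2*B+1)/(Mg - lc A g i))
        (Finset.mem_univ i)
      rw [if_neg hi] at this
      rw [hRdef]; linarith
    have := mul_lt_mul_of_pos_right hRge hδ
    rw [div_mul_cancel₀ _ hδ.ne'] at this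
    linarith
  set g' : J → ℝ := fun j => R * g j + v j with hg'
  have lcg' : ∀ i, lc A g' i = R * lc A g i + lc A v i := by
    intro i
    simp only [lc, hg', add_mul, Finset.sum_add_distrib, Finset.mul_sum, mul_assoc]
  have hMB : -B ≤ M := by
    have h1 := hBle i0
    have h2 := heq i0 hi0n
    rw [h2] at h1
    rw [abs_le] at h1
    linarith [h1.1]
  have houtlt : ∀ i, i ∉ Ft → lc A g' i < R * Mg + M := by
    intro i hi
    have h1 := hRbig i hi
    have h2 := hBle i
    rw [abs_le] at h2
    rw [lcg']
    nlinarith [h2.2]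
  have hinval : ∀ i ∈ Ft, lc A g' i = R * Mg + lc A v i := by
    intro i hi; rw [lcg', hgconst i hi]
  set F' : Finset I := Ft.filter (fun i => M ≤ lc A v i) with hF'
  have hmaxval : ∀ i', lc A g' i' ≤ R * Mg + M := by
    intro i'
    by_cases hi' : i' ∈ Ft
    · rw [hinval i' hi']
      linarith [hle i' hi']
    · linarith [houtlt i' hi']
  have key : ∀ i, i ∈ F' ↔ ∀ i', lc A g' i' ≤ lc A g' i := by
    intro i
    constructor
    · intro hiF' i'
      obtain ⟨hiF, hiM⟩ := Finset.mem_filter.1 hiF'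
      have hvi : lc A v i = M := le_antisymm (hle i hiF) hiM
      have : lc A g' i = R * Mg + M := by rw [hinval i hiF, hvi]
      rw [this]; exact hmaxval i'
    · intro h
      have hlow : R * Mg + M ≤ lc A g' i := by
        have := h i0
        rw [hinval i0 hi0F, heq i0 hi0n] at this
        exact this
      by_cases hi : i ∈ Ft
      · refine Finset.mem_filter.2 ⟨hi, ?_⟩
        rw [hinval i hi] at hlow
        linarith
      · exact absurd hlow (not_le.2 (houtlt i hi))
  have hfacial : FacialF A F' := ⟨g', key⟩
  have hsub : Ft ⊆ F' := hmin F' hfacial (fun i hi =>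
    Finset.mem_filter.2 ⟨hsupp i hi, le_of_eq (heq i hi).symm⟩)
  intro i hi
  exact le_antisymm (hle i hi) ((Finset.mem_filter.1 (hsub hi)).2)

end ExtMLE

open ExtMLE Real Finset Filter in
theorem extended_MLE {I J : Type} [Fintype I] [Fintype J] [DecidableEq I] [Nonempty I]
    (A : J → I → ℝ) (n : I → ℕ) (N : ℕ) (hN : N = ∑ i, n i) (hNpos : 0 < N)
    (t : J → ℝ) (ht : ∀ j, t j = ∑ i, (n i : ℝ) * A j i)
    (Ft : Finset I) (hFt : FacialF A Ft ∧ (∀ i, n i ≠ 0 → i ∈ Ft) ∧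
      ∀ F' : Finset I, FacialF A F' → (∀ i, n i ≠ 0 → i ∈ F') → Ft ⊆ F') :
    ∃! p : I → ℝ,
      p ∈ closure (expFam A) ∧ (∀ i, n i ≠ 0 → p i ≠ 0) ∧
      (∀ q ∈ closure (expFam A), (∀ i, n i ≠ 0 → q i ≠ 0) →
        ∑ i, (n i : ℝ) * Real.log (q i) ≤ ∑ i, (n i : ℝ) * Real.log (p i)) ∧
      (∀ j, ∑ i, A j i * p i = t j / N) ∧
      (∀ i, p i ≠ 0 ↔ i ∈ Ft) ∧
      (∃ θ : J → ℝ, p = ptrunc A Ft θ) := by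
  classical
  obtain ⟨⟨g, hg0⟩, hsupp, hmin⟩ := hFt
  have hg : ∀ i, i ∈ Ft ↔ ∀ i', lc A g i' ≤ lc A g i := hg0
  have hNR : (0:ℝ) < (N:ℝ) := by exact_mod_cast hNpos
  have hnz : ∃ i0, n i0 ≠ 0 := by
    by_contra h
    push_neg at h
    rw [hN] at hNpos
    simp [h] at hNpos
  obtain ⟨i0, hi0n⟩ := hnz
  have hi0F : i0 ∈ Ft := hsupp i0 hi0n
  have hne : Ft.Nonempty := ⟨i0, hi0F⟩
  set w : I → ℝ := fun i => (n i : ℝ) / N with hw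
  have hw0 : ∀ i, 0 ≤ w i := fun i => div_nonneg (Nat.cast_nonneg _) hNR.le
  have hwz : ∀ i, i ∉ Ft → w i = 0 := by
    intro i hi
    have hni : n i = 0 := by by_contra h; exact hi (hsupp i h)
    simp [hw, hni]
  have hwpos : ∀ i, n i ≠ 0 → 0 < w i := by
    intro i hni
    have : (0:ℝ) < (n i : ℝ) := by exact_mod_cast Nat.pos_of_ne_zero hni
    exact div_pos this hNR
  have hwsum : ∑ i ∈ Ft, w i = 1 := by
    have h1 : ∑ i ∈ Ft, w i = ∑ i, w i :=
      Finset.sum_subset (Finset.subset_univ Ft) (fun i _ hi => hwz i hi)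
    rw [h1, hw]
    rw [← Finset.sum_div, ← Nat.cast_sum, ← hN]
    exact div_self hNR.ne'
  have hsumW : ∀ x : I → ℝ, (N:ℝ) * (∑ i ∈ Ft, w i * x i) = ∑ i, (n i : ℝ) * x i := by
    intro x
    have h1 : ∑ i ∈ Ft, w i * x i = ∑ i, w i * x i :=
      Finset.sum_subset (Finset.subset_univ Ft)
        (fun i _ hi => by rw [hwz i hi, zero_mul])
    rw [h1, Finset.mul_sum]
    apply Finset.sum_congr rfl
    intro i _
    simp only [hw]
    field_simp
  have hkey : ∀ (v : J → ℝ) (M : ℝ), (∀ i ∈ Ft, lc A v i ≤ M) →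
      (∑ i ∈ Ft, w i * lc A v i = M) → ∀ i ∈ Ft, lc A v i = M := by
    intro v M hle hsum
    refine face_min_const A n Ft g hg hsupp hmin v M hle ?_ ⟨i0, hi0n⟩
    intro i hin
    have hzero : ∑ i ∈ Ft, w i * (M - lc A v i) = 0 := by
      calc ∑ i ∈ Ft, w i * (M - lc A v i)
          = ∑ i ∈ Ft, (w i * M - w i * lc A v i) :=
            Finset.sum_congr rfl fun i _ => by ring
        _ = (∑ i ∈ Ft, w i * M) - ∑ i ∈ Ft, w i * lc A v i := Finset.sum_sub_distrib _ _
        _ = 0 := by rw [← Finset.sum_mul, hwsum, one_mul, hsum]; ring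
    have hterm := (Finset.sum_eq_zero_iff_of_nonneg (fun i hi =>
      mul_nonneg (hw0 i) (sub_nonneg.2 (hle i hi)))).1 hzero
    have := hterm i (hsupp i hin)
    have hwi : w i ≠ 0 := (hwpos i hin).ne'
    have : M - lc A v i = 0 := by
      rcases mul_eq_zero.1 this with h | h
      · exact absurd h hwi
      · exact h
    linarith [this]
  obtain ⟨θs, hθs⟩ := exists_argmax A w Ft hne hw0 hwsum i0 hi0F hkey
  have hZpos : (0:ℝ) < ∑ i ∈ Ft, Real.exp (lc A θs i) := zf_pos A Ft θs hne
  set p : I → ℝ := ptrunc A Ft θs with hp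
  have hpin : ∀ i ∈ Ft, p i = Real.exp (lc A θs i) / (∑ i' ∈ Ft, Real.exp (lc A θs i')) :=
    fun i hi => ptrunc_mem A Ft θs hi hne
  have hpout : ∀ i, i ∉ Ft → p i = 0 := fun i hi => ptrunc_zero A Ft θs hi
  have hppos : ∀ i ∈ Ft, 0 < p i := fun i hi => ptrunc_pos A Ft θs hi hne
  have hpsum : ∑ i ∈ Ft, p i = 1 := ptrunc_sum A Ft θs hne
  have hsupport : ∀ i, p i ≠ 0 ↔ i ∈ Ft := by
    intro i
    constructor
    · intro h; by_contra hi; exact h (hpout i hi)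
    · intro hi; exact (hppos i hi).ne'
  have hp2 : ∀ i, n i ≠ 0 → p i ≠ 0 := fun i hi => (hsupport i).2 (hsupp i hi)
  -- moment condition over Ft
  have hmom : ∀ j, ∑ i ∈ Ft, A j i * p i = ∑ i ∈ Ft, w i * A j i := by
    intro j
    set ej : J → ℝ := Pi.single j 1 with hej
    have hlcs : ∀ (s : ℝ) (i : I), lc A (θs + s • ej) i
        = lc A θs i + s * A j i := by
      intro s i
      have hsingle : lc A ej i = A j i := by
        rw [hej, lc, Finset.sum_eq_single j]
        · simp
        · intro b _ hb; simp [Pi.single_apply, hb]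
        · intro h; exact absurd (Finset.mem_univ j) h
      rw [lc_add, lc_smul, hsingle]
    set φf : ℝ → ℝ := fun s => ((∑ i ∈ Ft, w i * lc A θs i) + s * (∑ i ∈ Ft, w i * A j i))
      - Real.log (∑ i ∈ Ft, Real.exp (lc A θs i + s * A j i)) with hφdef
    have hφeq : ∀ s : ℝ, φf s = (∑ i ∈ Ft, w i * lc A (θs + s • ej) i)
        - Real.log (∑ i ∈ Ft, Real.exp (lc A (θs + s • ej) i)) := by
      intro s
      rw [hφdef]
      simp only [hlcs s]
      congr 1
      rw [Finset.mul_sum, ← Finset.sum_add_distrib]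
      exact Finset.sum_congr rfl fun i _ => by ring
    have hφzero : φf 0 = (∑ i ∈ Ft, w i * lc A θs i)
        - Real.log (∑ i ∈ Ft, Real.exp (lc A θs i)) := by
      simp [hφdef]
    have hφle : ∀ s, φf s ≤ φf 0 := by
      intro s
      rw [hφeq s, hφzero]
      exact hθs _
    have hD : HasDerivAt (fun s : ℝ => ∑ i ∈ Ft, Real.exp (lc A θs i + s * A j i))
        (∑ i ∈ Ft, A j i * Real.exp (lc A θs i)) 0 := by
      apply HasDerivAt.fun_sum
      intro i _
      have h1 : HasDerivAt (fun s : ℝ => lc A θs i + s * A j i) (A j i) 0 := by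
        simpa using ((hasDerivAt_id (0:ℝ)).mul_const (A j i)).const_add (lc A θs i)
      simpa [mul_comm] using h1.exp
    have hlin : HasDerivAt (fun s : ℝ => (∑ i ∈ Ft, w i * lc A θs i)
        + s * (∑ i ∈ Ft, w i * A j i)) (∑ i ∈ Ft, w i * A j i) 0 := by
      simpa using ((hasDerivAt_id (0:ℝ)).mul_const (∑ i ∈ Ft, w i * A j i)).const_add
        (∑ i ∈ Ft, w i * lc A θs i)
    have hZ0 : (∑ i ∈ Ft, Real.exp (lc A θs i + 0 * A j i)) ≠ 0 := by
      simpa using hZpos.ne'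
    have hlog := hD.log hZ0
    have hφd : HasDerivAt φf ((∑ i ∈ Ft, w i * A j i)
        - (∑ i ∈ Ft, A j i * Real.exp (lc A θs i))
          / (∑ i ∈ Ft, Real.exp (lc A θs i))) 0 := by
      rw [hφdef]
      have := hlin.sub hlog
      simpa [Pi.sub_def] using this
    have hloc : IsLocalMax φf 0 := Filter.Eventually.of_forall hφle
    have hderiv0 := hloc.hasDerivAt_eq_zero hφd
    have hC2 : (∑ i ∈ Ft, w i * A j i)
        = (∑ i ∈ Ft, A j i * Real.exp (lc A θs i))
          / (∑ i ∈ Ft, Real.exp (lc A θs i)) := by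
      linarith [hderiv0]
    calc ∑ i ∈ Ft, A j i * p i
        = ∑ i ∈ Ft, A j i * Real.exp (lc A θs i) / (∑ i' ∈ Ft, Real.exp (lc A θs i')) :=
          Finset.sum_congr rfl fun i hi => by rw [hpin i hi, mul_div_assoc]
      _ = (∑ i ∈ Ft, A j i * Real.exp (lc A θs i)) / (∑ i' ∈ Ft, Real.exp (lc A θs i')) := by
          rw [Finset.sum_div]
      _ = ∑ i ∈ Ft, w i * A j i := hC2.symm
  -- moment condition, final form
  have hmom2 : ∀ j, ∑ i, A j i * p i = t j / N := by
    intro j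
    have h1 : ∑ i, A j i * p i = ∑ i ∈ Ft, A j i * p i :=
      (Finset.sum_subset (Finset.subset_univ Ft)
        (fun i _ hi => by rw [hpout i hi, mul_zero])).symm
    rw [h1, hmom j, ht j, eq_div_iff hNR.ne', mul_comm]
    exact hsumW (fun i => A j i)
  -- closure membership
  have hclos : p ∈ closure (expFam A) := by
    set Mg : ℝ := lc A g i0 with hMgdef
    have hgmax : ∀ i', lc A g i' ≤ Mg := (hg i0).1 hi0F
    have hgconst : ∀ i ∈ Ft, lc A g i = Mg := fun i hi =>
      le_antisymm (hgmax i) (((hg i).1 hi) i0)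
    have hglt : ∀ i, i ∉ Ft → lc A g i < Mg := by
      intro i hi
      by_contra hcon
      push_neg at hcon
      exact hi ((hg i).2 fun i' => (hgmax i').trans hcon)
    have hlcsg : ∀ (s : ℝ) (i : I), lc A (θs + s • g) i = lc A θs i + s * lc A g i := by
      intro s i; rw [lc_add, lc_smul]
    have hnum : ∀ i, Filter.Tendsto
        (fun s : ℝ => Real.exp (lc A θs i + s * (lc A g i - Mg))) Filter.atTop
        (nhds (if i ∈ Ft then Real.exp (lc A θs i) else 0)) := by
      intro i
      by_cases hi : i ∈ Ft
      · rw [if_pos hi]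
        have heq : (fun s : ℝ => Real.exp (lc A θs i + s * (lc A g i - Mg)))
            = fun _ => Real.exp (lc A θs i) := by
          funext s; rw [hgconst i hi]; simp
        rw [heq]; exact tendsto_const_nhds
      · rw [if_neg hi]
        have hd : lc A g i - Mg < 0 := sub_neg.2 (hglt i hi)
        have h1 : Filter.Tendsto (fun s : ℝ => lc A θs i + s * (lc A g i - Mg))
            Filter.atTop Filter.atBot :=
          tendsto_atBot_add_const_left _ _ (tendsto_id.atTop_mul_const_of_neg hd)
        exact Real.tendsto_exp_atBot.comp h1
    have hden : Filter.Tendsto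
        (fun s : ℝ => ∑ i', Real.exp (lc A θs i' + s * (lc A g i' - Mg))) Filter.atTop
        (nhds (∑ i' ∈ Ft, Real.exp (lc A θs i'))) := by
      have h := tendsto_finset_sum Finset.univ (fun i' (_ : i' ∈ Finset.univ) => hnum i')
      rwa [Finset.sum_ite_mem, Finset.univ_inter] at h
    refine mem_closure_of_tendsto (b := (Filter.atTop : Filter ℝ)) (f := fun s : ℝ => fun i =>
        Real.exp (∑ j, (θs + s • g) j * A j i
        - Real.log (∑ i', Real.exp (∑ j, (θs + s • g) j * A j i')))) ?_
      (Filter.Eventually.of_forall fun s => ⟨θs + s • g, rfl⟩)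
    rw [tendsto_pi_nhds]
    intro i
    have hFeq : ∀ s : ℝ, Real.exp (lc A θs i + s * (lc A g i - Mg))
          / (∑ i', Real.exp (lc A θs i' + s * (lc A g i' - Mg)))
        = Real.exp (∑ j, (θs + s • g) j * A j i
          - Real.log (∑ i', Real.exp (∑ j, (θs + s • g) j * A j i'))) := by
      intro s
      have hZf : (0:ℝ) < ∑ i', Real.exp (lc A (θs + s • g) i') :=
        Finset.sum_pos (fun _ _ => Real.exp_pos _) Finset.univ_nonempty
      have hZD : (0:ℝ) < ∑ i', Real.exp (lc A θs i' + s * (lc A g i' - Mg)) :=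
        Finset.sum_pos (fun _ _ => Real.exp_pos _) Finset.univ_nonempty
      have hstart : Real.exp (∑ j, (θs + s • g) j * A j i
          - Real.log (∑ i', Real.exp (∑ j, (θs + s • g) j * A j i')))
          = Real.exp (lc A (θs + s • g) i) / (∑ i', Real.exp (lc A (θs + s • g) i')) := by
        show Real.exp (lc A (θs + s • g) i
          - Real.log (∑ i', Real.exp (lc A (θs + s • g) i'))) = _
        rw [Real.exp_sub, Real.exp_log hZf]
      rw [hstart, div_eq_div_iff hZD.ne' hZf.ne']
      have hexp : ∀ i', Real.exp (lc A θs i' + s * (lc A g i' - Mg))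
          = Real.exp (lc A (θs + s • g) i') * Real.exp (-(s * Mg)) := by
        intro i'
        rw [← Real.exp_add, hlcsg]
        congr 1
        ring
      simp only [hexp]
      rw [← Finset.sum_mul]
      ring
    have hlim := (hnum i).div hden hZpos.ne'
    have hgoal : Filter.Tendsto (fun s : ℝ => Real.exp (lc A θs i + s * (lc A g i - Mg))
        / (∑ i', Real.exp (lc A θs i' + s * (lc A g i' - Mg)))) Filter.atTop (nhds (p i)) := by
      by_cases hi : i ∈ Ft
      · rw [hpin i hi]; simpa [hi, Pi.div_def] using hlim
      · rw [hpout i hi]; simpa [hi, Pi.div_def] using hlim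
    exact hgoal.congr hFeq
  -- value of L at truncated members
  have hNcast : (∑ i, (n i : ℝ)) = (N:ℝ) := by rw [hN]; push_cast; ring
  have hLtrunc : ∀ θ : J → ℝ, ∑ i, (n i : ℝ) * Real.log (ptrunc A Ft θ i)
      = (N:ℝ) * ((∑ i ∈ Ft, w i * lc A θ i)
        - Real.log (∑ i ∈ Ft, Real.exp (lc A θ i))) := by
    intro θ
    have h1 : ∀ i : I, (n i : ℝ) * Real.log (ptrunc A Ft θ i)
        = (n i : ℝ) * (lc A θ i - Real.log (∑ i' ∈ Ft, Real.exp (lc A θ i'))) := by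
      intro i
      by_cases hni : n i = 0
      · simp [hni]
      · rw [log_ptrunc A Ft θ (hsupp i hni)]
    rw [Finset.sum_congr rfl fun i _ => h1 i]
    have hexp : ∑ i, (n i : ℝ) * (lc A θ i - Real.log (∑ i' ∈ Ft, Real.exp (lc A θ i')))
        = (∑ i, (n i : ℝ) * lc A θ i)
          - (∑ i, (n i : ℝ)) * Real.log (∑ i' ∈ Ft, Real.exp (lc A θ i')) := by
      simp [mul_sub, Finset.sum_sub_distrib, Finset.sum_mul]
    rw [hexp, hNcast, ← hsumW (fun i => lc A θ i)]
    ring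
  -- likelihood bound on family members
  have hLfam : ∀ θ : J → ℝ, (∑ i, (n i : ℝ) * Real.log (Real.exp (∑ j, θ j * A j i
      - Real.log (∑ i', Real.exp (∑ j, θ j * A j i')))))
      ≤ ∑ i, (n i : ℝ) * Real.log (p i) := by
    intro θ
    have h1 : ∀ i : I, (n i : ℝ) * Real.log (Real.exp (∑ j, θ j * A j i
        - Real.log (∑ i', Real.exp (∑ j, θ j * A j i'))))
        = (n i : ℝ) * (lc A θ i - Real.log (∑ i', Real.exp (lc A θ i'))) := by
      intro i
      rw [Real.log_exp]
      rfl
    rw [Finset.sum_congr rfl fun i _ => h1 i]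
    have hexp : ∑ i, (n i : ℝ) * (lc A θ i - Real.log (∑ i', Real.exp (lc A θ i')))
        = (∑ i, (n i : ℝ) * lc A θ i)
          - (∑ i, (n i : ℝ)) * Real.log (∑ i', Real.exp (lc A θ i')) := by
      simp [mul_sub, Finset.sum_sub_distrib, Finset.sum_mul]
    rw [hexp, hNcast, ← hsumW (fun i => lc A θ i)]
    have hLp' : ∑ i, (n i : ℝ) * Real.log (p i)
        = (N:ℝ) * ((∑ i ∈ Ft, w i * lc A θs i)
          - Real.log (∑ i ∈ Ft, Real.exp (lc A θs i))) := by
      rw [hp]; exact hLtrunc θs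
    rw [hLp']
    have hlogle : Real.log (∑ i ∈ Ft, Real.exp (lc A θ i))
        ≤ Real.log (∑ i', Real.exp (lc A θ i')) :=
      Real.log_le_log (zf_pos A Ft θ hne)
        (Finset.sum_le_sum_of_subset_of_nonneg (Finset.subset_univ Ft)
          (fun i _ _ => (Real.exp_pos _).le))
    calc (N:ℝ) * (∑ i ∈ Ft, w i * lc A θ i)
          - (N:ℝ) * Real.log (∑ i', Real.exp (lc A θ i'))
        ≤ (N:ℝ) * (∑ i ∈ Ft, w i * lc A θ i)
          - (N:ℝ) * Real.log (∑ i ∈ Ft, Real.exp (lc A θ i)) := by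
          have := mul_le_mul_of_nonneg_left hlogle hNR.le
          linarith
      _ = (N:ℝ) * ((∑ i ∈ Ft, w i * lc A θ i)
          - Real.log (∑ i ∈ Ft, Real.exp (lc A θ i))) := by ring
      _ ≤ (N:ℝ) * ((∑ i ∈ Ft, w i * lc A θs i)
          - Real.log (∑ i ∈ Ft, Real.exp (lc A θs i))) :=
          mul_le_mul_of_nonneg_left (hθs θ) hNR.le
  -- maximality
  have hmax : ∀ q ∈ closure (expFam A), (∀ i, n i ≠ 0 → q i ≠ 0) →
      ∑ i, (n i : ℝ) * Real.log (q i) ≤ ∑ i, (n i : ℝ) * Real.log (p i) := by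
    intro q hq hq0
    have hcont : ContinuousAt (fun q' : I → ℝ => ∑ i, (n i : ℝ) * Real.log (q' i)) q := by
      have : Filter.Tendsto (fun q' : I → ℝ => ∑ i, (n i : ℝ) * Real.log (q' i)) (nhds q)
          (nhds (∑ i, (n i : ℝ) * Real.log (q i))) := by
        apply tendsto_finset_sum
        intro i _
        by_cases hni : n i = 0
        · simpa [hni] using
            (tendsto_const_nhds : Filter.Tendsto (fun _ : I → ℝ => (0:ℝ)) (nhds q) (nhds 0))
        · exact continuousAt_const.mul
            (((continuous_apply i).continuousAt).log (hq0 i hni))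
      exact this
    have himg := mem_closure_image hcont hq
    have hsub : (fun q' : I → ℝ => ∑ i, (n i : ℝ) * Real.log (q' i)) '' expFam A
        ⊆ Set.Iic (∑ i, (n i : ℝ) * Real.log (p i)) := by
      rintro x ⟨q', ⟨θ, rfl⟩, rfl⟩
      exact hLfam θ
    have hf := closure_mono hsub himg
    rw [closure_Iic] at hf
    exact hf
  refine ⟨p, ⟨hclos, hp2, hmax, hmom2, hsupport, ⟨θs, hp⟩⟩, ?_⟩
  rintro p' ⟨hc', hnz', hmax', hmom', hsupp', θ', rfl⟩
  have hZ'pos : (0:ℝ) < ∑ i ∈ Ft, Real.exp (lc A θ' i) := zf_pos A Ft θ' hne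
  have hp'in : ∀ i ∈ Ft, ptrunc A Ft θ' i
      = Real.exp (lc A θ' i) / (∑ i' ∈ Ft, Real.exp (lc A θ' i')) :=
    fun i hi => ptrunc_mem A Ft θ' hi hne
  have hp'pos : ∀ i ∈ Ft, 0 < ptrunc A Ft θ' i := fun i hi => ptrunc_pos A Ft θ' hi hne
  have hp'sum : ∑ i ∈ Ft, ptrunc A Ft θ' i = 1 := ptrunc_sum A Ft θ' hne
  have hLeq : ∑ i, (n i : ℝ) * Real.log (ptrunc A Ft θ' i)
      = ∑ i, (n i : ℝ) * Real.log (p i) :=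
    le_antisymm (hmax _ hc' hnz') (hmax' p hclos hp2)
  have hfeq : (∑ i ∈ Ft, w i * lc A θ' i) - Real.log (∑ i ∈ Ft, Real.exp (lc A θ' i))
      = (∑ i ∈ Ft, w i * lc A θs i) - Real.log (∑ i ∈ Ft, Real.exp (lc A θs i)) := by
    have h1 := hLtrunc θ'
    have h2 := hLtrunc θs
    rw [← hp] at h2
    apply mul_left_cancel₀ hNR.ne'
    rw [← h1, ← h2, hLeq]
  have hswap : ∀ (u : I → ℝ) (θ : J → ℝ), ∑ i ∈ Ft, u i * lc A θ i
      = ∑ j, θ j * (∑ i ∈ Ft, A j i * u i) := by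
    intro u θ
    have e1 : ∀ i : I, u i * lc A θ i = ∑ j, θ j * (A j i * u i) := by
      intro i
      rw [lc, Finset.mul_sum]
      exact Finset.sum_congr rfl fun j _ => by ring
    rw [Finset.sum_congr rfl fun i _ => e1 i, Finset.sum_comm]
    exact Finset.sum_congr rfl fun j _ => by rw [← Finset.mul_sum]
  have hmomsum : ∀ θ : J → ℝ, ∑ i ∈ Ft, p i * lc A θ i = ∑ i ∈ Ft, w i * lc A θ i := by
    intro θ
    rw [hswap p θ, hswap w θ]
    apply Finset.sum_congr rfl
    intro j _
    congr 1
    rw [hmom j]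
    exact Finset.sum_congr rfl fun i _ => by ring
  have hlogp : ∀ i ∈ Ft, Real.log (p i)
      = lc A θs i - Real.log (∑ i' ∈ Ft, Real.exp (lc A θs i')) := by
    intro i hi
    rw [hp]
    exact log_ptrunc A Ft θs hi
  have key0 : ∑ i ∈ Ft, p i * Real.log (ptrunc A Ft θ' i / p i) = 0 := by
    have hterm : ∀ i ∈ Ft, p i * Real.log (ptrunc A Ft θ' i / p i)
        = p i * lc A θ' i - p i * lc A θs i
          - p i * Real.log (∑ i' ∈ Ft, Real.exp (lc A θ' i'))
          + p i * Real.log (∑ i' ∈ Ft, Real.exp (lc A θs i')) := by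
      intro i hi
      rw [Real.log_div (hp'pos i hi).ne' (hppos i hi).ne', log_ptrunc A Ft θ' hi,
        hlogp i hi]
      ring
    have hsplit : ∑ i ∈ Ft, p i * Real.log (ptrunc A Ft θ' i / p i)
        = (∑ i ∈ Ft, p i * lc A θ' i) - (∑ i ∈ Ft, p i * lc A θs i)
          - (∑ i ∈ Ft, p i) * Real.log (∑ i' ∈ Ft, Real.exp (lc A θ' i'))
          + (∑ i ∈ Ft, p i) * Real.log (∑ i' ∈ Ft, Real.exp (lc A θs i')) := by
      rw [Finset.sum_congr rfl hterm]
      simp [Finset.sum_sub_distrib, Finset.sum_add_distrib, Finset.sum_mul]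
    rw [hsplit, hmomsum θ', hmomsum θs, hpsum, one_mul, one_mul]
    linarith [hfeq]
  have key2 : ∑ i ∈ Ft, p i * (ptrunc A Ft θ' i / p i - 1) = 0 := by
    have hterm2 : ∀ i ∈ Ft, p i * (ptrunc A Ft θ' i / p i - 1)
        = ptrunc A Ft θ' i - p i := by
      intro i hi
      have hppi : p i ≠ 0 := (hppos i hi).ne'
      field_simp
    rw [Finset.sum_congr rfl hterm2, Finset.sum_sub_distrib, hp'sum, hpsum, sub_self]
  have hle2 : ∀ i ∈ Ft, p i * Real.log (ptrunc A Ft θ' i / p i)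
      ≤ p i * (ptrunc A Ft θ' i / p i - 1) := fun i hi =>
    mul_le_mul_of_nonneg_left
      (Real.log_le_sub_one_of_pos (div_pos (hp'pos i hi) (hppos i hi))) (hppos i hi).le
  have heqterm := (Finset.sum_eq_sum_iff_of_le hle2).1 (by rw [key0, key2])
  funext i
  by_cases hi : i ∈ Ft
  · have h := heqterm i hi
    have hr : Real.log (ptrunc A Ft θ' i / p i) = ptrunc A Ft θ' i / p i - 1 :=
      mul_left_cancel₀ (hppos i hi).ne' h
    have hratio : ptrunc A Ft θ' i / p i = 1 := by
      by_contra hne1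
      exact absurd hr (ne_of_lt (Real.log_lt_sub_one_of_pos
        (div_pos (hp'pos i hi) (hppos i hi)) hne1))
    exact (div_eq_one_iff_eq (hppos i hi).ne').1 hratio
  · rw [hpout i hi, ptrunc_zero A Ft θ' hi]
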